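/- Let (B, L, θ) be a Boolean dynamical system and let A ∈ B. Then S(H(A)) := {B ∈ B : there is n ∈ ℕ₀ such that θ_β(B) ∈ H(A) for all β ∈ L^n, and θ_γ(B) ∈ H(A) ⊕ B_reg for all γ ∈ L^* with |γ| < n} is a saturated hereditary ideal of B containing A. -/

import Mathlib

namespace BoolDyn

variable {X L : Type*}

section Defs

variable [GeneralizedBooleanAlgebra X]

/-- A map `X → X` is an action on the generalized Boolean algebra `X` if it preserves
`⊥`, `⊔`, `⊓` and `\`. -/
def IsBoolAction (f : X → X) : Prop :=
  f ⊥ = ⊥ ∧ (∀ a b : X, f (a ⊔ b) = f a ⊔ f b) ∧ (∀ a b : X, f (a ⊓ b) = f a ⊓ f b) ∧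
    ∀ a b : X, f (a \ b) = f a \ f b

/-- `θ_β := θ_{β_n} ∘ ⋯ ∘ θ_{β_1}` for a word `β = β_1 ⋯ β_n ∈ L^*`, with `θ_∅ = id`. -/
def thetaWord (θ : L → X → X) (β : List L) (a : X) : X :=
  β.foldl (fun x α => θ α x) a

/-- `Δ_a := {α ∈ L : θ_α(a) ≠ ∅}`. -/
def Delta (θ : L → X → X) (a : X) : Set L := {α : L | θ α a ≠ ⊥}

/-- `a` is regular if `0 < |Δ_b| < ∞` for every nonempty `b ⊆ a`. -/
def IsRegularElem (θ : L → X → X) (a : X) : Prop :=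
  ∀ b : X, b ≤ a → b ≠ ⊥ → (Delta θ b).Finite ∧ (Delta θ b).Nonempty

/-- `B_reg`, the set of regular elements. -/
def regSet (θ : L → X → X) : Set X := {a : X | IsRegularElem θ a}

/-- An ideal of a generalized Boolean algebra: a nonempty subset closed under `⊔` and
downward closed under `≤`. -/
structure IsIdeal (I : Set X) : Prop where
  nonempty : I.Nonempty
  sup_mem : ∀ ⦃a b : X⦄, a ∈ I → b ∈ I → a ⊔ b ∈ I
  lower : ∀ ⦃a b : X⦄, a ∈ I → b ≤ a → b ∈ I

/-- A hereditary subset: closed under all the actions. -/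
def Hereditary (θ : L → X → X) (H : Set X) : Prop := ∀ a ∈ H, ∀ α : L, θ α a ∈ H

/-- Saturated: `a ∈ H` whenever `a` is regular and `θ_α(a) ∈ H` for every `α ∈ Δ_a`. -/
def Saturated (θ : L → X → X) (H : Set X) : Prop :=
  ∀ a : X, IsRegularElem θ a → (∀ α ∈ Delta θ a, θ α a ∈ H) → a ∈ H

/-- `J`-saturated: `a ∈ H` whenever `a ∈ J` and `θ_α(a) ∈ H` for every `α ∈ Δ_a`. -/
def JSaturated (θ : L → X → X) (J H : Set X) : Prop :=
  ∀ a ∈ J, (∀ α ∈ Delta θ a, θ α a ∈ H) → a ∈ H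

/-- A cycle: `β` nonempty, `a ≠ ∅`, and `θ_β(b) = b` for every `b ⊆ a`. -/
def IsCycle (θ : L → X → X) (β : List L) (a : X) : Prop :=
  β ≠ [] ∧ a ≠ ⊥ ∧ ∀ b : X, b ≤ a → thetaWord θ β b = b

/-- `(β, a)` has no exits: for every `t ∈ {1,…,n}` and every nonempty `b ⊆ θ_{β_{1,t}}(a)`,
`b` is regular and `Δ_b = {β_{t+1}}` (with `β_{n+1} := β_1`). -/
def NoExits (θ : L → X → X) (β : List L) (a : X) : Prop :=
  ∀ t : ℕ, 1 ≤ t → t ≤ β.length →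
    ∀ b : X, b ≤ thetaWord θ (β.take t) a → b ≠ ⊥ →
      IsRegularElem θ b ∧ Delta θ b = {α : L | β[t % β.length]? = some α}

/-- Condition (L): there is no cycle with no exits. -/
def CondL (θ : L → X → X) : Prop :=
  ¬ ∃ (β : List L) (a : X), IsCycle θ β a ∧ NoExits θ β a

/-- A filter of a generalized Boolean algebra. -/
structure IsBoolFilter (F : Set X) : Prop where
  nonempty : F.Nonempty
  bot_not_mem : ⊥ ∉ F
  inf_mem : ∀ ⦃a b : X⦄, a ∈ F → b ∈ F → a ⊓ b ∈ F
  upper : ∀ ⦃a b : X⦄, a ∈ F → a ≤ b → b ∈ F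

/-- An ultrafilter: a maximal filter. -/
def IsUltra (F : Set X) : Prop :=
  IsBoolFilter F ∧ ∀ G : Set X, IsBoolFilter G → F ⊆ G → G = F

/-- A filter of the ideal `I`, viewed as a generalized Boolean algebra in its own right. -/
structure IsFilterOn (I F : Set X) : Prop where
  subset : F ⊆ I
  nonempty : F.Nonempty
  bot_not_mem : ⊥ ∉ F
  inf_mem : ∀ ⦃a b : X⦄, a ∈ F → b ∈ F → a ⊓ b ∈ F
  upper : ∀ a b : X, a ∈ F → b ∈ I → a ≤ b → b ∈ F

/-- An ultrafilter of the ideal `I`: a maximal filter of `I`. -/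
def IsUltraOn (I F : Set X) : Prop :=
  IsFilterOn I F ∧ ∀ G : Set X, IsFilterOn I G → F ⊆ G → G = F

/-- `R_α := {a ∈ B : a ≤ θ_α(c) for some c ∈ B}`. -/
def Rset (θ : L → X → X) (α : L) : Set X := {a : X | ∃ c : X, a ≤ θ α c}

/-- `β^k`, the `k`-fold concatenation of the word `β`. -/
def wordPow (β : List L) : ℕ → List L
  | 0 => []
  | k + 1 => β ++ wordPow β k

/-- An ultrafilter cycle. -/
def UltrafilterCycle (θ : L → X → X) (β : List L) (η : Set X) : Prop :=
  β ≠ [] ∧ IsUltra η ∧ ∀ a ∈ η, thetaWord θ β a ∈ η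

/-- A maximal tail. -/
structure MaximalTail (θ : L → X → X) (T : Set X) : Prop where
  nonempty : T.Nonempty
  not_bot_mem : ⊥ ∉ T
  t2 : ∀ (a : X) (α : L), θ α a ∈ T → a ∈ T
  t3 : ∀ a b : X, a ⊔ b ∈ T → a ∈ T ∨ b ∈ T
  t4 : ∀ a b : X, a ∈ T → a ≤ b → b ∈ T
  t5 : ∀ a : X, a ∈ T → IsRegularElem θ a → ∃ α : L, θ α a ∈ T
  t6 : ∀ a b : X, a ∈ T → b ∈ T →
    ∃ β γ : List L, thetaWord θ β a ⊓ thetaWord θ γ b ∈ T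

/-- A cyclic (maximal) tail. -/
def CyclicTail (θ : L → X → X) (T : Set X) : Prop :=
  ∃ (β : List L) (η : Set X), UltrafilterCycle θ β η ∧
    T = {b : X | ∃ γ : List L, thetaWord θ γ b ∈ η} ∧
    ∃ A ∈ η, ∀ γ : List L, γ ≠ [] → ∀ b : X, b ≤ A → thetaWord θ γ b ∈ η →
      b ∈ η ∧ ∃ k : ℕ, 0 < k ∧ γ = wordPow β k

/-- Condition (K). -/
def CondK (θ : L → X → X) : Prop :=
  ¬ ∃ (β : List L) (η : Set X) (A : X), UltrafilterCycle θ β η ∧ A ∈ η ∧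
    ∀ γ : List L, γ ≠ [] → ∀ b : X, b ≤ A → thetaWord θ γ b ∈ η →
      b ∈ η ∧ ∃ k : ℕ, 0 < k ∧ γ = wordPow β k

/-- `H(A) = {b : b ≤ ⋃_{β ∈ F} θ_β(A) for some finite F ⊆ L^*}`. -/
def HA (θ : L → X → X) (A : X) : Set X :=
  {b : X | ∃ F : Finset (List L), b ≤ F.sup fun β => thetaWord θ β A}

/-- `I₁ ⊕ I₂`, the smallest ideal containing the ideals `I₁` and `I₂`. -/
def oplus (I₁ I₂ : Set X) : Set X := {c : X | ∃ a ∈ I₁, ∃ b ∈ I₂, c = a ⊔ b}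

/-- `S(H(A))`. -/
def SHA (θ : L → X → X) (A : X) : Set X :=
  {b : X | ∃ n : ℕ, (∀ β : List L, β.length = n → thetaWord θ β b ∈ HA θ A) ∧
    ∀ γ : List L, γ.length < n → thetaWord θ γ b ∈ oplus (HA θ A) (regSet θ)}

/-- Minimality: `{∅}` and `B` are the only saturated hereditary ideals. -/
def Minimal (θ : L → X → X) : Prop :=
  ∀ H : Set X, IsIdeal H → Hereditary θ H → Saturated θ H → H = {⊥} ∨ H = Set.univ

end Defs

end BoolDyn

open BoolDyn

section AuxProofs

variable {X L : Type*} [GeneralizedBooleanAlgebra X] {θ : L → X → X}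

lemma theta_mono (hθ : ∀ α : L, IsBoolAction (θ α)) (α : L) {a b : X} (h : a ≤ b) :
    θ α a ≤ θ α b := by
  have h2 := (hθ α).2.1 a b
  rw [sup_eq_right.mpr h] at h2
  exact le_sup_left.trans h2.ge

lemma thetaWord_nil (a : X) : thetaWord θ [] a = a := rfl

lemma thetaWord_cons (α : L) (β : List L) (a : X) :
    thetaWord θ (α :: β) a = thetaWord θ β (θ α a) := rfl

lemma thetaWord_append (β γ : List L) (a : X) :
    thetaWord θ (β ++ γ) a = thetaWord θ γ (thetaWord θ β a) :=
  List.foldl_append ..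

lemma thetaWord_bot (hθ : ∀ α : L, IsBoolAction (θ α)) (β : List L) :
    thetaWord θ β (⊥ : X) = ⊥ := by
  induction β with
  | nil => rfl
  | cons α β ih => rw [thetaWord_cons, (hθ α).1, ih]

lemma thetaWord_sup (hθ : ∀ α : L, IsBoolAction (θ α)) (β : List L) (a b : X) :
    thetaWord θ β (a ⊔ b) = thetaWord θ β a ⊔ thetaWord θ β b := by
  induction β generalizing a b with
  | nil => rfl
  | cons α β ih => rw [thetaWord_cons, (hθ α).2.1, ih, thetaWord_cons, thetaWord_cons]

lemma thetaWord_mono (hθ : ∀ α : L, IsBoolAction (θ α)) (β : List L) {a b : X}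
    (h : a ≤ b) : thetaWord θ β a ≤ thetaWord θ β b := by
  induction β generalizing a b with
  | nil => exact h
  | cons α β ih => exact ih (theta_mono hθ α h)

lemma bot_mem_HA (A : X) : (⊥ : X) ∈ HA θ A :=
  ⟨∅, by simp⟩

lemma self_mem_HA (A : X) : A ∈ HA θ A :=
  ⟨{[]}, by simp [thetaWord_nil]⟩

lemma HA_lower {A b c : X} (hb : b ∈ HA θ A) (h : c ≤ b) : c ∈ HA θ A := by
  obtain ⟨F, hF⟩ := hb
  exact ⟨F, h.trans hF⟩

lemma HA_sup {A b c : X} (hb : b ∈ HA θ A) (hc : c ∈ HA θ A) : b ⊔ c ∈ HA θ A := by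
  classical
  obtain ⟨F, hF⟩ := hb
  obtain ⟨G, hG⟩ := hc
  refine ⟨F ∪ G, ?_⟩
  rw [Finset.sup_union]
  exact sup_le_sup hF hG

lemma theta_finset_sup (hθ : ∀ α : L, IsBoolAction (θ α)) (α : L)
    (F : Finset (List L)) (f : List L → X) :
    θ α (F.sup f) = F.sup fun β => θ α (f β) := by
  classical
  induction F using Finset.induction with
  | empty => simpa using (hθ α).1
  | @insert _ _ hx ih => rw [Finset.sup_insert, (hθ α).2.1, ih, Finset.sup_insert]

lemma HA_hered (hθ : ∀ α : L, IsBoolAction (θ α)) {A b : X} (hb : b ∈ HA θ A)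
    (α : L) : θ α b ∈ HA θ A := by
  classical
  obtain ⟨F, hF⟩ := hb
  refine ⟨F.image (· ++ [α]), ?_⟩
  rw [Finset.sup_image]
  refine (theta_mono hθ α hF).trans ?_
  rw [theta_finset_sup hθ]
  exact Finset.sup_le fun β hβ => Finset.le_sup (f := fun β => thetaWord θ ((· ++ [α]) β) A)
    hβ |>.trans_eq' (by simp [thetaWord_append, thetaWord_cons, thetaWord_nil])

lemma HA_hered_word (hθ : ∀ α : L, IsBoolAction (θ α)) {A b : X} (hb : b ∈ HA θ A)
    (γ : List L) : thetaWord θ γ b ∈ HA θ A := by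
  induction γ generalizing b with
  | nil => exact hb
  | cons α γ ih => exact ih (HA_hered hθ hb α)

lemma bot_mem_regSet : (⊥ : X) ∈ regSet θ := by
  intro b hb hne
  exact absurd (le_bot_iff.mp hb) hne

lemma regSet_lower {a b : X} (ha : a ∈ regSet θ) (h : b ≤ a) : b ∈ regSet θ :=
  fun c hc hne => ha c (hc.trans h) hne

lemma Delta_mono (hθ : ∀ α : L, IsBoolAction (θ α)) {a b : X} (h : a ≤ b) :
    Delta θ a ⊆ Delta θ b := by
  intro α hα hbot
  exact hα (le_bot_iff.mp (hbot ▸ theta_mono hθ α h))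

lemma regSet_sup (hθ : ∀ α : L, IsBoolAction (θ α)) {a b : X}
    (ha : a ∈ regSet θ) (hb : b ∈ regSet θ) : a ⊔ b ∈ regSet θ := by
  intro c hc hne
  have hdecomp : c = c ⊓ a ⊔ c ⊓ b := by
    rw [← inf_sup_left, inf_eq_left.mpr hc]
  have hsub : Delta θ c ⊆ Delta θ (c ⊓ a) ∪ Delta θ (c ⊓ b) := by
    intro α hα
    by_contra hmem
    simp only [Set.mem_union, not_or, Delta, Set.mem_setOf_eq, not_not] at hmem
    apply hα
    calc θ α c = θ α (c ⊓ a ⊔ c ⊓ b) := by rw [← hdecomp]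
    _ = θ α (c ⊓ a) ⊔ θ α (c ⊓ b) := (hθ α).2.1 _ _
    _ = ⊥ := by rw [hmem.1, hmem.2, sup_idem]
  have hfin : (Delta θ (c ⊓ a)).Finite ∧ (Delta θ (c ⊓ b)).Finite := by
    constructor
    · rcases eq_or_ne (c ⊓ a) ⊥ with h | h
      · have : Delta θ (c ⊓ a) = ∅ := by
          ext α; simp [Delta, h, (hθ α).1]
        simp [this]
      · exact (ha _ inf_le_right h).1
    · rcases eq_or_ne (c ⊓ b) ⊥ with h | h
      · have : Delta θ (c ⊓ b) = ∅ := by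
          ext α; simp [Delta, h, (hθ α).1]
        simp [this]
      · exact (hb _ inf_le_right h).1
  refine ⟨((hfin.1.union hfin.2).subset hsub), ?_⟩
  rcases eq_or_ne (c ⊓ a) ⊥ with h | h
  · have h2 : c ⊓ b ≠ ⊥ := by
      intro h2
      exact hne (by rw [hdecomp, h, h2, sup_idem])
    obtain ⟨α, hα⟩ := (hb _ inf_le_right h2).2
    exact ⟨α, Delta_mono hθ inf_le_left hα⟩
  · obtain ⟨α, hα⟩ := (ha _ inf_le_right h).2
    exact ⟨α, Delta_mono hθ inf_le_left hα⟩

lemma HA_subset_oplus (A : X) : HA θ A ⊆ oplus (HA θ A) (regSet θ) :=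
  fun a ha => ⟨a, ha, ⊥, bot_mem_regSet, (sup_bot_eq a).symm⟩

lemma oplus_lower {A : X} {b c : X} (hb : b ∈ oplus (HA θ A) (regSet θ)) (h : c ≤ b) :
    c ∈ oplus (HA θ A) (regSet θ) := by
  obtain ⟨x, hx, y, hy, rfl⟩ := hb
  refine ⟨c ⊓ x, HA_lower hx inf_le_right, c ⊓ y, regSet_lower hy inf_le_right, ?_⟩
  rw [← inf_sup_left, inf_eq_left.mpr h]

lemma oplus_sup (hθ : ∀ α : L, IsBoolAction (θ α)) {A : X} {b c : X}
    (hb : b ∈ oplus (HA θ A) (regSet θ)) (hc : c ∈ oplus (HA θ A) (regSet θ)) :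
    b ⊔ c ∈ oplus (HA θ A) (regSet θ) := by
  obtain ⟨x, hx, y, hy, rfl⟩ := hb
  obtain ⟨x', hx', y', hy', rfl⟩ := hc
  exact ⟨x ⊔ x', HA_sup hx hx', y ⊔ y', regSet_sup hθ hy hy', sup_sup_sup_comm x y x' y'⟩

/-- The witness `n` in the definition of `SHA` can be increased. -/
lemma SHA_mono_witness (hθ : ∀ α : L, IsBoolAction (θ α)) {A b : X} {n m : ℕ}
    (hnm : n ≤ m)
    (h1 : ∀ β : List L, β.length = n → thetaWord θ β b ∈ HA θ A)
    (h2 : ∀ γ : List L, γ.length < n → thetaWord θ γ b ∈ oplus (HA θ A) (regSet θ)) :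
    (∀ β : List L, β.length = m → thetaWord θ β b ∈ HA θ A) ∧
      ∀ γ : List L, γ.length < m → thetaWord θ γ b ∈ oplus (HA θ A) (regSet θ) := by
  have key : ∀ β : List L, n ≤ β.length → thetaWord θ β b ∈ HA θ A := by
    intro β hβ
    have hsplit : β = β.take n ++ β.drop n := (List.take_append_drop n β).symm
    have hlen : (β.take n).length = n := by
      rw [List.length_take]; omega
    have heq : thetaWord θ β b = thetaWord θ (β.drop n) (thetaWord θ (β.take n) b) := by
      conv_lhs => rw [hsplit]
      exact thetaWord_append ..
    rw [heq]
    exact HA_hered_word hθ (h1 _ hlen) _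
  refine ⟨fun β hβ => key β (hβ ▸ hnm), fun γ hγ => ?_⟩
  rcases lt_or_ge γ.length n with h | h
  · exact h2 γ h
  · exact HA_subset_oplus A (key γ h)

end AuxProofs


/-- **Statement 10.** `S(H(A))` is a saturated hereditary ideal of `B` containing `A`. -/
theorem SHA_saturated_hereditary_ideal
    {X L : Type*} [GeneralizedBooleanAlgebra X] (θ : L → X → X)
    (hθ : ∀ α : L, IsBoolAction (θ α)) (A : X) :
    IsIdeal (SHA θ A) ∧ Hereditary θ (SHA θ A) ∧ Saturated θ (SHA θ A) ∧
      A ∈ SHA θ A := by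
  classical
  have hA : A ∈ SHA θ A := ⟨0, fun β hβ => by
    rw [List.length_eq_zero_iff.mp hβ]; exact self_mem_HA A, fun γ hγ => by omega⟩
  have hbot : (⊥ : X) ∈ SHA θ A := ⟨0, fun β hβ => by
    rw [List.length_eq_zero_iff.mp hβ]; exact bot_mem_HA A, fun γ hγ => by omega⟩
  refine ⟨⟨⟨A, hA⟩, ?_, ?_⟩, ?_, ?_, hA⟩
  · -- closed under sup
    rintro a b ⟨n, hn1, hn2⟩ ⟨m, hm1, hm2⟩
    obtain ⟨hn1', hn2'⟩ := SHA_mono_witness hθ (le_max_left n m) hn1 hn2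
    obtain ⟨hm1', hm2'⟩ := SHA_mono_witness hθ (le_max_right n m) hm1 hm2
    refine ⟨max n m, fun β hβ => ?_, fun γ hγ => ?_⟩
    · rw [thetaWord_sup hθ]
      exact HA_sup (hn1' β hβ) (hm1' β hβ)
    · rw [thetaWord_sup hθ]
      exact oplus_sup hθ (hn2' γ hγ) (hm2' γ hγ)
  · -- lower
    rintro a b ⟨n, hn1, hn2⟩ hba
    refine ⟨n, fun β hβ => HA_lower (hn1 β hβ) (thetaWord_mono hθ β hba),
      fun γ hγ => oplus_lower (hn2 γ hγ) (thetaWord_mono hθ γ hba)⟩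
  · -- hereditary
    rintro a ⟨n, hn1, hn2⟩ α
    obtain ⟨hn1', hn2'⟩ := SHA_mono_witness hθ (Nat.le_succ n) hn1 hn2
    refine ⟨n, fun β hβ => ?_, fun γ hγ => ?_⟩
    · rw [← thetaWord_cons]
      exact hn1' (α :: β) (by simp [hβ])
    · rw [← thetaWord_cons]
      rcases Nat.lt_or_ge (α :: γ).length n with h | h
      · exact hn2 _ h
      · have : (α :: γ).length = n := by simp at h ⊢; omega
        exact HA_subset_oplus A (hn1 _ this)
  · -- saturated
    intro a hreg hsat
    rcases eq_or_ne a ⊥ with rfl | hne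
    · exact hbot
    obtain ⟨hfin, -⟩ := hreg a le_rfl hne
    choose! n hn1 hn2 using hsat
    set N : ℕ := hfin.toFinset.sup n with hN
    have hle : ∀ α ∈ Delta θ a, n α ≤ N := fun α hα =>
      Finset.le_sup (hfin.mem_toFinset.mpr hα)
    have key : ∀ α ∈ Delta θ a,
        (∀ β : List L, β.length = N → thetaWord θ β (θ α a) ∈ HA θ A) ∧
        ∀ γ : List L, γ.length < N →
          thetaWord θ γ (θ α a) ∈ oplus (HA θ A) (regSet θ) :=
      fun α hα => SHA_mono_witness hθ (hle α hα) (hn1 α hα) (hn2 α hα)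
    refine ⟨N + 1, fun β hβ => ?_, fun γ hγ => ?_⟩
    · cases β with
      | nil => simp at hβ
      | cons α β' =>
        rw [thetaWord_cons]
        by_cases hα : α ∈ Delta θ a
        · exact (key α hα).1 β' (by simpa using hβ)
        · have : θ α a = ⊥ := not_not.mp hα
          rw [this, thetaWord_bot hθ]
          exact bot_mem_HA A
    · cases γ with
      | nil =>
        exact ⟨⊥, bot_mem_HA A, a, hreg, (bot_sup_eq a).symm⟩
      | cons α γ' =>
        rw [thetaWord_cons]
        by_cases hα : α ∈ Delta θ a
        · exact (key α hα).2 γ' (by simp at hγ ⊢; omega)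
        · have : θ α a = ⊥ := not_not.mp hα
          rw [this, thetaWord_bot hθ]
          exact HA_subset_oplus A (bot_mem_HA A)
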